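/- Let G be an ordered group with Riesz interpolation and I₁, I₂ ideals with I₁ + I₂ = G, with order units u, v₁, v₂ on G, I₁, I₂ respectively. Suppose τᵢ is an extreme state on (Iᵢ, vᵢ) for i = 1, 2, and that on I₁ ∩ I₂ the restrictions of τ₁ and τ₂ are nonzero scalar multiples of each other. Then there exists an extreme state τ on (G, u) such that τᵢ is a positive scalar multiple of τ|_{Iᵢ} for i = 1, 2. -/

import Mathlib

private theorem aux_zero {M : Type*} [AddCommGroup M] (f : M → ℝ)
    (hf : ∀ a b : M, f (a + b) = f a + f b) : f 0 = 0 := by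
  have h := hf 0 0; simp at h; linarith

private theorem aux_sub {M : Type*} [AddCommGroup M] (f : M → ℝ)
    (hf : ∀ a b : M, f (a + b) = f a + f b) (a b : M) : f (a - b) = f a - f b := by
  have h := hf (a - b) b
  rw [sub_add_cancel] at h
  linarith

private theorem aux_nsmul {M : Type*} [AddCommGroup M] (f : M → ℝ)
    (hf : ∀ a b : M, f (a + b) = f a + f b) (n : ℕ) (a : M) : f (n • a) = n * f a := by
  induction n with
  | zero => simp [aux_zero f hf]
  | succ n ih => rw [succ_nsmul, hf, ih]; push_cast; ring


/-- The state space of an ordered abelian group `G` with order unit `u`. -/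
def stateSet (G : Type*) [AddCommGroup G] [PartialOrder G] (u : G) :
    Set (G → ℝ) :=
  {f | (∀ a b : G, f (a + b) = f a + f b) ∧ (∀ a : G, 0 ≤ a → 0 ≤ f a) ∧ f u = 1}

/-- The state space of an ideal `I` (as a subgroup) with order unit `v ∈ I`. -/
def stateSetSub {G : Type*} [AddCommGroup G] [PartialOrder G] (I : AddSubgroup G)
    (v : I) : Set (I → ℝ) :=
  {f | (∀ a b : I, f (a + b) = f a + f b) ∧
       (∀ a : I, (0 : G) ≤ (a : G) → 0 ≤ f a) ∧ f v = 1}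

/-- Pull-back of extreme states: if `G` has Riesz interpolation, `I₁ + I₂ = G`
for ideals `I₁, I₂`, and `τᵢ` are extreme states on `(Iᵢ, vᵢ)` whose
restrictions to `I₁ ∩ I₂` are nonzero scalar multiples of each other, then
there is an extreme state `τ` on `(G, u)` with `τᵢ` a positive scalar multiple
of `τ|_{Iᵢ}` for `i = 1, 2`. -/
theorem stmt9 {G : Type*} [AddCommGroup G] [PartialOrder G]
    (hadd : ∀ g h x : G, g ≤ h → g + x ≤ h + x)
    (hdir : ∀ g h : G, ∃ y : G, g ≤ y ∧ h ≤ y)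
    (hRiesz : ∀ a₁ a₂ b₁ b₂ : G, a₁ ≤ b₁ → a₁ ≤ b₂ → a₂ ≤ b₁ → a₂ ≤ b₂ →
      ∃ z : G, a₁ ≤ z ∧ a₂ ≤ z ∧ z ≤ b₁ ∧ z ≤ b₂)
    (I₁ I₂ : AddSubgroup G)
    (hconv₁ : ∀ g h x : G, g ∈ I₁ → h ∈ I₁ → g ≤ x → x ≤ h → x ∈ I₁)
    (hdir₁ : ∀ x ∈ I₁, ∃ a ∈ I₁, ∃ b ∈ I₁, 0 ≤ a ∧ 0 ≤ b ∧ x = a - b)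
    (hconv₂ : ∀ g h x : G, g ∈ I₂ → h ∈ I₂ → g ≤ x → x ≤ h → x ∈ I₂)
    (hdir₂ : ∀ x ∈ I₂, ∃ a ∈ I₂, ∃ b ∈ I₂, 0 ≤ a ∧ 0 ≤ b ∧ x = a - b)
    (hsum : I₁ ⊔ I₂ = ⊤)
    (u : G) (hu : 0 ≤ u ∧ ∀ g : G, ∃ n : ℕ, -(n • u) ≤ g ∧ g ≤ n • u)
    (v₁ : G) (hv₁I : v₁ ∈ I₁)
    (hv₁ : 0 ≤ v₁ ∧ ∀ g ∈ I₁, ∃ n : ℕ, -(n • v₁) ≤ g ∧ g ≤ n • v₁)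
    (v₂ : G) (hv₂I : v₂ ∈ I₂)
    (hv₂ : 0 ≤ v₂ ∧ ∀ g ∈ I₂, ∃ n : ℕ, -(n • v₂) ≤ g ∧ g ≤ n • v₂)
    (τ₁ : I₁ → ℝ) (hτ₁ : τ₁ ∈ Set.extremePoints ℝ (stateSetSub I₁ ⟨v₁, hv₁I⟩))
    (τ₂ : I₂ → ℝ) (hτ₂ : τ₂ ∈ Set.extremePoints ℝ (stateSetSub I₂ ⟨v₂, hv₂I⟩))
    (hnonzero : ∃ (x : G) (h₁ : x ∈ I₁), x ∈ I₂ ∧ τ₁ ⟨x, h₁⟩ ≠ 0)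
    (hscalar : ∃ c : ℝ, c ≠ 0 ∧ ∀ (x : G) (h₁ : x ∈ I₁) (h₂ : x ∈ I₂),
      τ₁ ⟨x, h₁⟩ = c * τ₂ ⟨x, h₂⟩) :
    ∃ τ ∈ Set.extremePoints ℝ (stateSet G u),
      ∃ c₁ c₂ : ℝ, 0 < c₁ ∧ 0 < c₂ ∧
        (∀ x : I₁, τ₁ x = c₁ * τ (x : G)) ∧
        (∀ x : I₂, τ₂ x = c₂ * τ (x : G)) := by
  classical
  obtain ⟨hu0, huB⟩ := hu
  obtain ⟨hv₁0, hv₁B⟩ := hv₁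
  obtain ⟨hv₂0, hv₂B⟩ := hv₂
  obtain ⟨hτ₁S, hτ₁E⟩ := hτ₁
  obtain ⟨hτ₂S, hτ₂E⟩ := hτ₂
  obtain ⟨add₁, pos₁, norm₁⟩ := hτ₁S
  obtain ⟨add₂, pos₂, norm₂⟩ := hτ₂S
  obtain ⟨c, hc, hcval⟩ := hscalar
  -- order helpers
  have hle : ∀ a b : G, a ≤ b → 0 ≤ b - a := by
    intro a b h
    have h2 := hadd a b (-a) h
    simpa [sub_eq_add_neg] using h2
  have hle' : ∀ a b : G, 0 ≤ b - a → a ≤ b := by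
    intro a b h
    have h2 := hadd 0 (b - a) a h
    simpa using h2
  have haddpos : ∀ a b : G, 0 ≤ a → 0 ≤ b → 0 ≤ a + b := by
    intro a b ha hb
    have h2 := hadd 0 a b ha
    simp at h2
    exact le_trans hb h2
  -- decomposition
  have hdec : ∀ g : G, ∃ y₁ ∈ I₁, ∃ y₂ ∈ I₂, y₁ + y₂ = g := by
    intro g
    have hg : g ∈ I₁ ⊔ I₂ := by rw [hsum]; trivial
    exact AddSubgroup.mem_sup.mp hg
  choose y1 hy1 y2 hy2 hysum using hdec
  -- subtype additivity helpers
  have sub₁ : ∀ (a b : G) (ha : a ∈ I₁) (hb : b ∈ I₁),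
      τ₁ ⟨a - b, sub_mem ha hb⟩ = τ₁ ⟨a, ha⟩ - τ₁ ⟨b, hb⟩ := by
    intro a b ha hb
    exact aux_sub τ₁ add₁ ⟨a, ha⟩ ⟨b, hb⟩
  have sub₂ : ∀ (a b : G) (ha : a ∈ I₂) (hb : b ∈ I₂),
      τ₂ ⟨a - b, sub_mem ha hb⟩ = τ₂ ⟨a, ha⟩ - τ₂ ⟨b, hb⟩ := by
    intro a b ha hb
    exact aux_sub τ₂ add₂ ⟨a, ha⟩ ⟨b, hb⟩
  -- the unnormalized functional
  set f : G → ℝ := fun g => τ₁ ⟨y1 g, hy1 g⟩ + c * τ₂ ⟨y2 g, hy2 g⟩ with hfdef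
  have hfval : ∀ (g z₁ z₂ : G) (h₁ : z₁ ∈ I₁) (h₂ : z₂ ∈ I₂), z₁ + z₂ = g →
      f g = τ₁ ⟨z₁, h₁⟩ + c * τ₂ ⟨z₂, h₂⟩ := by
    intro g z₁ z₂ h₁ h₂ hzg
    have hd1 : y1 g - z₁ ∈ I₁ := sub_mem (hy1 g) h₁
    have heq : y1 g - z₁ = z₂ - y2 g := by
      have h : y1 g + y2 g = z₁ + z₂ := (hysum g).trans hzg.symm
      rw [sub_eq_sub_iff_add_eq_add, h]; abel
    have hd2 : y1 g - z₁ ∈ I₂ := heq ▸ sub_mem h₂ (hy2 g)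
    have hc1 := hcval (y1 g - z₁) hd1 hd2
    have e2 : τ₂ ⟨y1 g - z₁, hd2⟩ = τ₂ ⟨z₂ - y2 g, sub_mem h₂ (hy2 g)⟩ := by
      congr 1
      exact Subtype.ext heq
    rw [sub₁ _ _ (hy1 g) h₁, e2, sub₂ _ _ h₂ (hy2 g)] at hc1
    show τ₁ ⟨y1 g, hy1 g⟩ + c * τ₂ ⟨y2 g, hy2 g⟩ = _
    linarith [hc1]
  have fadd : ∀ a b : G, f (a + b) = f a + f b := by
    intro a b
    have h := hfval (a + b) (y1 a + y1 b) (y2 a + y2 b)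
      (add_mem (hy1 a) (hy1 b)) (add_mem (hy2 a) (hy2 b))
      (by rw [show y1 a + y1 b + (y2 a + y2 b) = (y1 a + y2 a) + (y1 b + y2 b) by abel,
        hysum a, hysum b])
    rw [h, show τ₁ ⟨y1 a + y1 b, add_mem (hy1 a) (hy1 b)⟩
        = τ₁ ⟨y1 a, hy1 a⟩ + τ₁ ⟨y1 b, hy1 b⟩ from add₁ ⟨y1 a, hy1 a⟩ ⟨y1 b, hy1 b⟩,
      show τ₂ ⟨y2 a + y2 b, add_mem (hy2 a) (hy2 b)⟩
        = τ₂ ⟨y2 a, hy2 a⟩ + τ₂ ⟨y2 b, hy2 b⟩ from add₂ ⟨y2 a, hy2 a⟩ ⟨y2 b, hy2 b⟩]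
    show _ = (τ₁ ⟨y1 a, hy1 a⟩ + c * τ₂ ⟨y2 a, hy2 a⟩) +
      (τ₁ ⟨y1 b, hy1 b⟩ + c * τ₂ ⟨y2 b, hy2 b⟩)
    ring
  have fzero : f 0 = 0 := aux_zero f fadd
  have fsub : ∀ a b : G, f (a - b) = f a - f b := aux_sub f fadd
  have fnsmul : ∀ (n : ℕ) (a : G), f (n • a) = n * f a := aux_nsmul f fadd
  -- find a positive element of the intersection where τ₁ is positive
  obtain ⟨p, hpI1, hpI2, hp0, hτ₁p, hτ₂p⟩ :
      ∃ p, ∃ (h₁ : p ∈ I₁) (h₂ : p ∈ I₂), 0 ≤ p ∧ 0 < τ₁ ⟨p, h₁⟩ ∧ 0 < τ₂ ⟨p, h₂⟩ := by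
    obtain ⟨x, hxI1, hxI2, hx0⟩ := hnonzero
    obtain ⟨a₁, ha₁I, b₁, hb₁I, ha₁, hb₁, hx₁⟩ := hdir₁ x hxI1
    obtain ⟨a₂, ha₂I, b₂, hb₂I, ha₂, hb₂, hx₂⟩ := hdir₂ x hxI2
    have hxa₁ : x ≤ a₁ := by
      apply hle'; rw [show a₁ - x = b₁ by rw [hx₁]; abel]; exact hb₁
    have hxa₂ : x ≤ a₂ := by
      apply hle'; rw [show a₂ - x = b₂ by rw [hx₂]; abel]; exact hb₂
    obtain ⟨z, hxz, h0z, hza₁, hza₂⟩ := hRiesz x 0 a₁ a₂ hxa₁ hxa₂ ha₁ ha₂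
    have hzI1 : z ∈ I₁ := hconv₁ 0 a₁ z (zero_mem I₁) ha₁I h0z hza₁
    have hzI2 : z ∈ I₂ := hconv₂ 0 a₂ z (zero_mem I₂) ha₂I h0z hza₂
    have hwI1 : z - x ∈ I₁ := sub_mem hzI1 hxI1
    have hwI2 : z - x ∈ I₂ := sub_mem hzI2 hxI2
    have hw0 : 0 ≤ z - x := hle x z hxz
    have hxzw : τ₁ ⟨x, hxI1⟩ = τ₁ ⟨z, hzI1⟩ - τ₁ ⟨z - x, hwI1⟩ := by
      rw [← sub₁ z (z - x) hzI1 hwI1]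
      congr 1
      exact Subtype.ext (sub_sub_cancel z x).symm
    have hmake : ∀ (q : G) (hq₁ : q ∈ I₁) (hq₂ : q ∈ I₂), 0 ≤ q → 0 < τ₁ ⟨q, hq₁⟩ →
        ∃ p, ∃ (h₁ : p ∈ I₁) (h₂ : p ∈ I₂), 0 ≤ p ∧ 0 < τ₁ ⟨p, h₁⟩ ∧ 0 < τ₂ ⟨p, h₂⟩ := by
      intro q hq₁ hq₂ hq0 hq
      refine ⟨q, hq₁, hq₂, hq0, hq, ?_⟩
      have h1 := hcval q hq₁ hq₂
      have h2 := pos₂ ⟨q, hq₂⟩ hq0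
      rcases lt_or_eq_of_le h2 with h | h
      · exact h
      · exfalso; rw [← h, mul_zero] at h1; exact absurd h1 (ne_of_gt hq)
    rcases lt_trichotomy (τ₁ ⟨x, hxI1⟩) 0 with h | h | h
    · -- τ₁ (z - x) > 0
      have hzpos := pos₁ ⟨z, hzI1⟩ h0z
      exact hmake (z - x) hwI1 hwI2 hw0 (by linarith [hxzw])
    · exact absurd h hx0
    · exact hmake z hzI1 hzI2 h0z (by linarith [pos₁ ⟨z - x, hwI1⟩ hw0, hxzw])
  have hcpos : 0 < c := by
    have h1 := hcval p hpI1 hpI2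
    nlinarith
  -- Riesz decomposition
  have hRdec : ∀ g a b : G, 0 ≤ g → 0 ≤ a → 0 ≤ b → g ≤ a + b →
      ∃ z, 0 ≤ z ∧ z ≤ a ∧ z ≤ g ∧ g - z ≤ b := by
    intro g a b hg ha hb hgab
    have h1 : g - b ≤ a := by
      apply hle'; rw [show a - (g - b) = a + b - g by abel]; exact hle _ _ hgab
    have h2 : g - b ≤ g := by
      apply hle'; rw [show g - (g - b) = b by abel]; exact hb
    obtain ⟨z, h0z, hgbz, hza, hzg⟩ := hRiesz 0 (g - b) a g ha hg h1 h2
    refine ⟨z, h0z, hza, hzg, ?_⟩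
    apply hle'; rw [show b - (g - z) = z - (g - b) by abel]; exact hle _ _ hgbz
  -- positivity of f
  have fpos : ∀ g : G, 0 ≤ g → 0 ≤ f g := by
    intro g hg
    obtain ⟨a₁, ha₁I, b₁, hb₁I, ha₁, hb₁, hx₁⟩ := hdir₁ (y1 g) (hy1 g)
    obtain ⟨a₂, ha₂I, b₂, hb₂I, ha₂, hb₂, hx₂⟩ := hdir₂ (y2 g) (hy2 g)
    have hgle : g ≤ a₁ + a₂ := by
      apply hle'
      have e : a₁ + a₂ - g = b₁ + b₂ := by
        rw [← hysum g, hx₁, hx₂]; abel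
      rw [e]; exact haddpos _ _ hb₁ hb₂
    obtain ⟨z, hz0, hza, hzg, hgzb⟩ := hRdec g a₁ a₂ hg ha₁ ha₂ hgle
    have hzI1 : z ∈ I₁ := hconv₁ 0 a₁ z (zero_mem I₁) ha₁I hz0 hza
    have hgzI2 : g - z ∈ I₂ := hconv₂ 0 a₂ (g - z) (zero_mem I₂) ha₂I (hle z g hzg) hgzb
    rw [hfval g z (g - z) hzI1 hgzI2 (by abel)]
    have := pos₁ ⟨z, hzI1⟩ hz0
    have := pos₂ ⟨g - z, hgzI2⟩ (hle z g hzg)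
    nlinarith
  -- f p = τ₁ p, value on ideals
  have hfI1 : ∀ (x : G) (hx : x ∈ I₁), f x = τ₁ ⟨x, hx⟩ := by
    intro x hx
    rw [hfval x x 0 hx (zero_mem I₂) (add_zero x),
      show τ₂ ⟨(0 : G), zero_mem I₂⟩ = 0 from aux_zero τ₂ add₂]
    ring
  have hfI2 : ∀ (x : G) (hx : x ∈ I₂), f x = c * τ₂ ⟨x, hx⟩ := by
    intro x hx
    rw [hfval x 0 x (zero_mem I₁) hx (zero_add x),
      show τ₁ ⟨(0 : G), zero_mem I₁⟩ = 0 from aux_zero τ₁ add₁]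
    ring
  -- f u > 0
  have hfu : 0 < f u := by
    obtain ⟨n, _, hn2⟩ := huB p
    have h1 : f p ≤ f (n • u) := by
      have := fpos (n • u - p) (hle _ _ hn2)
      rw [fsub] at this; linarith
    rw [fnsmul] at h1
    have h2 : 0 < f p := by rw [hfI1 p hpI1]; exact hτ₁p
    have h3 : (0 : ℝ) ≤ n := Nat.cast_nonneg n
    nlinarith
  have hfune : f u ≠ 0 := ne_of_gt hfu
  set τ : G → ℝ := fun g => (f u)⁻¹ * f g with hτdef
  have hτmem : τ ∈ stateSet G u := by
    refine ⟨fun a b => ?_, fun a ha => ?_, ?_⟩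
    · show (f u)⁻¹ * f (a + b) = (f u)⁻¹ * f a + (f u)⁻¹ * f b
      rw [fadd]; ring
    · exact mul_nonneg (inv_nonneg.mpr (le_of_lt hfu)) (fpos a ha)
    · exact inv_mul_cancel₀ hfune
  -- vanishing lemma
  have vanish : ∀ (π : G → ℝ), (∀ a b : G, π (a + b) = π a + π b) →
      (∀ a : G, 0 ≤ a → 0 ≤ π a) →
      ∀ (J : AddSubgroup G) (w : G), (∀ g ∈ J, ∃ n : ℕ, -(n • w) ≤ g ∧ g ≤ n • w) →
      π w = 0 → ∀ x ∈ J, π x = 0 := by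
    intro π πadd πpos J w hwB hπw x hx
    obtain ⟨n, hn1, hn2⟩ := hwB x hx
    have h1 : π x ≤ π (n • w) := by
      have := πpos (n • w - x) (hle _ _ hn2)
      rw [aux_sub π πadd] at this; linarith
    have h2 : π (-(n • w)) ≤ π x := by
      have := πpos (x - -(n • w)) (hle _ _ hn1)
      rw [aux_sub π πadd] at this; linarith
    have h3 : π (n • w) = 0 := by rw [aux_nsmul π πadd, hπw]; ring
    have h4 : π (-(n • w)) = 0 := by
      have := aux_sub π πadd 0 (n • w)
      rw [zero_sub, aux_zero π πadd, h3] at this; linarith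
    linarith
  -- the key restriction lemma
  have main : ∀ (J : AddSubgroup G) (w : G) (hwJ : w ∈ J),
      (0 : G) ≤ w → (∀ g ∈ J, ∃ n : ℕ, -(n • w) ≤ g ∧ g ≤ n • w) →
      ∀ (π : J → ℝ), π ∈ Set.extremePoints ℝ (stateSetSub J ⟨w, hwJ⟩) →
      ∀ (d : ℝ), 0 < d → (∀ (x : G) (hx : x ∈ J), τ x = d * π ⟨x, hx⟩) →
      ∀ (σ ρ : G → ℝ), σ ∈ stateSet G u → ρ ∈ stateSet G u →
      ∀ (t s : ℝ), 0 < t → 0 < s →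
      (∀ g : G, t * σ g + s * ρ g = τ g) →
      ∀ (x : G) (hx : x ∈ J), σ x = σ w * π ⟨x, hx⟩ := by
    intro J w hwJ hw0 hwB π hπ d hd hτJ σ ρ hσ hρ t s ht hs hcomb x hx
    obtain ⟨⟨πadd, πpos, πnorm⟩, πext⟩ := hπ
    obtain ⟨σadd, σpos, σu⟩ := hσ
    obtain ⟨ρadd, ρpos, ρu⟩ := hρ
    have hσw : 0 ≤ σ w := σpos w hw0
    have hρw : 0 ≤ ρ w := ρpos w hw0
    have hτw : τ w = d := by rw [hτJ w hwJ, πnorm, mul_one]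
    have hcombw : t * σ w + s * ρ w = d := by rw [← hτw]; exact hcomb w
    rcases eq_or_lt_of_le hσw with hσ0 | hσpos
    · rw [vanish σ σadd σpos J w hwB hσ0.symm x hx, ← hσ0]; ring
    · rcases eq_or_lt_of_le hρw with hρ0 | hρpos
      · -- ρ vanishes on J
        have hρx : ρ x = 0 := vanish ρ ρadd ρpos J w hwB hρ0.symm x hx
        have hA : t * σ x = d * π ⟨x, hx⟩ := by
          have h := hcomb x; rw [hτJ x hx] at h
          have hz : s * ρ x = 0 := by rw [hρx]; ring
          linarith
        have hB : t * σ w = d := by rw [← hcombw, ← hρ0]; ring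
        have h3 : t * σ x = t * (σ w * π ⟨x, hx⟩) := by
          rw [hA, ← hB]; ring
        exact mul_left_cancel₀ (ne_of_gt ht) h3
      · -- both positive: use extremality of π
        set σ' : J → ℝ := fun a => σ a / σ w with hσ'def
        set ρ' : J → ℝ := fun a => ρ a / ρ w with hρ'def
        have hσ'mem : σ' ∈ stateSetSub J ⟨w, hwJ⟩ := by
          refine ⟨fun a b => ?_, fun a ha => ?_, ?_⟩
          · show σ ((a : G) + (b : G)) / σ w = σ a / σ w + σ b / σ w
            rw [σadd]; ring
          · exact div_nonneg (σpos _ ha) (le_of_lt hσpos)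
          · show σ w / σ w = 1
            exact div_self (ne_of_gt hσpos)
        have hρ'mem : ρ' ∈ stateSetSub J ⟨w, hwJ⟩ := by
          refine ⟨fun a b => ?_, fun a ha => ?_, ?_⟩
          · show ρ ((a : G) + (b : G)) / ρ w = ρ a / ρ w + ρ b / ρ w
            rw [ρadd]; ring
          · exact div_nonneg (ρpos _ ha) (le_of_lt hρpos)
          · show ρ w / ρ w = 1
            exact div_self (ne_of_gt hρpos)
        have hseg : π ∈ openSegment ℝ σ' ρ' := by
          refine ⟨t * σ w / d, s * ρ w / d, by positivity, by positivity, ?_, ?_⟩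
          · field_simp; linarith [hcombw]
          · funext a
            have hca := hcomb (a : G)
            rw [hτJ (a : G) a.2] at hca
            have ea : π ⟨(a : G), a.2⟩ = π a := rfl
            rw [ea] at hca
            show t * σ w / d * (σ a / σ w) + s * ρ w / d * (ρ a / ρ w) = π a
            have hσw' : σ w ≠ 0 := ne_of_gt hσpos
            have hρw' : ρ w ≠ 0 := ne_of_gt hρpos
            have hd' : d ≠ 0 := ne_of_gt hd
            calc t * σ w / d * (σ ↑a / σ w) + s * ρ w / d * (ρ ↑a / ρ w)
                = (t * σ ↑a + s * ρ ↑a) / d := by field_simp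
              _ = (d * π a) / d := by rw [hca]
              _ = π a := by field_simp
        have hσ'eq := πext hσ'mem hρ'mem hseg
        have h2 : σ x / σ w = π ⟨x, hx⟩ := congrFun hσ'eq ⟨x, hx⟩
        rw [← h2]
        field_simp
  -- values of τ on the ideals
  have hτI1 : ∀ (x : G) (hx : x ∈ I₁), τ x = (f u)⁻¹ * τ₁ ⟨x, hx⟩ := by
    intro x hx
    show (f u)⁻¹ * f x = _
    rw [hfI1 x hx]
  have hτI2 : ∀ (x : G) (hx : x ∈ I₂), τ x = (c * (f u)⁻¹) * τ₂ ⟨x, hx⟩ := by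
    intro x hx
    show (f u)⁻¹ * f x = _
    rw [hfI2 x hx]; ring
  -- the final coincidence lemma
  have final : ∀ (σ ρ : G → ℝ), σ ∈ stateSet G u → ρ ∈ stateSet G u →
      ∀ (t s : ℝ), 0 < t → 0 < s → (∀ g : G, t * σ g + s * ρ g = τ g) → σ = τ := by
    intro σ ρ hσ hρ t s ht hs hcomb
    have hσ1 := main I₁ v₁ hv₁I hv₁0 hv₁B τ₁ ⟨⟨add₁, pos₁, norm₁⟩, hτ₁E⟩
      ((f u)⁻¹) (by positivity) hτI1 σ ρ hσ hρ t s ht hs hcomb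
    have hσ2 := main I₂ v₂ hv₂I hv₂0 hv₂B τ₂ ⟨⟨add₂, pos₂, norm₂⟩, hτ₂E⟩
      (c * (f u)⁻¹) (by positivity) hτI2 σ ρ hσ hρ t s ht hs hcomb
    obtain ⟨σadd, σpos, σu⟩ := hσ
    -- relation between σ v₁ and σ v₂
    have hpr : σ v₁ * τ₁ ⟨p, hpI1⟩ = σ v₂ * τ₂ ⟨p, hpI2⟩ := by
      rw [← hσ1 p hpI1, ← hσ2 p hpI2]
    have hcp := hcval p hpI1 hpI2
    have hv12 : σ v₂ = c * σ v₁ := by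
      have h := hpr
      rw [hcp] at h
      apply mul_right_cancel₀ (ne_of_gt hτ₂p)
      linear_combination -h
    -- σ u = σ v₁ * f u
    have hσg : ∀ g : G, σ g = σ v₁ * f g := by
      intro g
      have h1 : σ g = σ (y1 g) + σ (y2 g) := by
        rw [← σadd]; congr 1; exact (hysum g).symm
      rw [h1, hσ1 (y1 g) (hy1 g), hσ2 (y2 g) (hy2 g), hv12,
        hfval g (y1 g) (y2 g) (hy1 g) (hy2 g) (hysum g)]
      ring
    have hσv₁ : σ v₁ * f u = 1 := by rw [← hσg u, σu]
    have hσv₁' : σ v₁ = (f u)⁻¹ := eq_inv_of_mul_eq_one_left hσv₁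
    funext g
    rw [hσg g, hσv₁']
  -- package everything
  refine ⟨τ, ⟨hτmem, ?_⟩, f u, f u / c, hfu, by positivity, ?_, ?_⟩
  · intro σ hσ ρ hρ hseg
    obtain ⟨t, s, ht, hs, hts, heq⟩ := hseg
    have hcomb : ∀ g : G, t * σ g + s * ρ g = τ g := by
      intro g
      have := congrFun heq g
      simpa using this
    have hcomb' : ∀ g : G, s * ρ g + t * σ g = τ g := by
      intro g; linarith [hcomb g]
    exact final σ ρ hσ hρ t s ht hs hcomb
  · intro x
    have h := hτI1 (x : G) x.2
    have ex : τ₁ ⟨(x : G), x.2⟩ = τ₁ x := rfl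
    rw [ex] at h
    rw [h]
    field_simp
  · intro x
    have h := hτI2 (x : G) x.2
    have ex : τ₂ ⟨(x : G), x.2⟩ = τ₂ x := rfl
    rw [ex] at h
    rw [h]
    field_simp
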